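/- Let H be a complex Hilbert space, let T be a bounded linear operator on H with canonical polar decomposition T = U|T|, and let λ ∈ [0,1]. Then 2√(λ-λ²)·‖Ã‖ ≤ ‖M_λ(T)‖ ≤ λ‖T‖ + (1-λ)‖T^D‖, where Ã = |T|^{1/2}U|T|^{1/2} is the Aluthge transform of T. In particular, 2√(λ-λ²)·r(T) ≤ ‖M_λ(T)‖ ≤ ‖T‖, where r(T) is the spectral radius of T. -/

import Mathlib

set_option maxHeartbeats 1000000


open ContinuousLinearMap

/-- Spectral radius is invariant under swapping a product. -/
lemma specRad_mul_comm {A : Type*} [NormedRing A] [NormedAlgebra ℂ A] (a b : A) :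
    spectralRadius ℂ (a * b) = spectralRadius ℂ (b * a) := by
  have key : ∀ x y : A, spectralRadius ℂ (x * y) ≤ spectralRadius ℂ (y * x) := by
    intro x y
    rw [spectralRadius, spectralRadius]
    refine iSup₂_le fun k hk => ?_
    rcases eq_or_ne k 0 with rfl | hk0
    · simp
    · have : k ∈ spectrum ℂ (x * y) \ {0} := ⟨hk, hk0⟩
      rw [spectrum.nonzero_mul_comm] at this
      exact le_iSup₂_of_le k this.1 le_rfl
  exact le_antisymm (key a b) (key b a)

/-- Norm bounds for the λ-mean transform: `2√(λ-λ²)‖T̃‖ ≤ ‖M_λ(T)‖ ≤ λ‖T‖ + (1-λ)‖T^D‖`,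
and in particular `2√(λ-λ²) r(T) ≤ ‖M_λ(T)‖ ≤ ‖T‖`.  Here `S = |T|^{1/2}`, so the Aluthge
transform is `S * U * S` and the Duggal transform is `R * U`. -/
theorem stmt7 {H : Type*} [NormedAddCommGroup H] [InnerProductSpace ℂ H] [CompleteSpace H]
    (T U R S : H →L[ℂ] H)
    (hRpos : R.IsPositive) (hRsq : R * R = adjoint T * T)
    (hSpos : S.IsPositive) (hSsq : S * S = R)
    (hUpar : U * adjoint U * U = U)
    (hker : LinearMap.ker (U : H →ₗ[ℂ] H) = LinearMap.ker (T : H →ₗ[ℂ] H))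
    (hTUR : T = U * R)
    (l : ℝ) (hl : l ∈ Set.Icc (0 : ℝ) 1) :
    (2 * Real.sqrt (l - l ^ 2) * ‖S * U * S‖ ≤ ‖(l : ℂ) • T + ((1 : ℂ) - (l : ℂ)) • (R * U)‖ ∧
     ‖(l : ℂ) • T + ((1 : ℂ) - (l : ℂ)) • (R * U)‖ ≤ l * ‖T‖ + (1 - l) * ‖R * U‖) ∧
    (2 * Real.sqrt (l - l ^ 2) * (spectralRadius ℂ T).toReal ≤
        ‖(l : ℂ) • T + ((1 : ℂ) - (l : ℂ)) • (R * U)‖ ∧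
     ‖(l : ℂ) • T + ((1 : ℂ) - (l : ℂ)) • (R * U)‖ ≤ ‖T‖) := by
  obtain ⟨hl0, hl1⟩ := hl
  set c := Real.sqrt (l - l ^ 2) with hcdef
  have hll : (0:ℝ) ≤ l - l ^ 2 := by nlinarith
  have hc0 : (0:ℝ) ≤ c := Real.sqrt_nonneg _
  set M := (l : ℂ) • T + ((1 : ℂ) - (l : ℂ)) • (R * U) with hMdef
  have hSadj : adjoint S = S := hSpos.isSelfAdjoint
  have hRadj : adjoint R = R := hRpos.isSelfAdjoint
  have hSstar : star S = S := hSpos.isSelfAdjoint.star_eq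
  have hRstar : star R = R := hRpos.isSelfAdjoint.star_eq
  -- ‖U‖ ≤ 1
  have hU3 : U * (adjoint U * U) = U := by rw [← mul_assoc]; exact hUpar
  have hPP : (adjoint U * U) * (adjoint U * U) = adjoint U * U := by
    rw [mul_assoc, hU3]
  have hPstar : star (adjoint U * U) = adjoint U * U := by
    simp [← star_eq_adjoint, star_mul, star_star]
  have hPnorm : ‖adjoint U * U‖ ≤ 1 := by
    have h1 : ‖adjoint U * U‖ * ‖adjoint U * U‖ = ‖adjoint U * U‖ :=
      (CStarRing.norm_star_mul_self (x := adjoint U * U)).symm.trans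
        (by rw [hPstar, hPP])
    nlinarith [norm_nonneg (adjoint U * U)]
  have hUnorm : ‖U‖ ≤ 1 := by
    have h1 : ‖U‖ * ‖U‖ = ‖adjoint U * U‖ := by
      rw [← CStarRing.norm_star_mul_self (x := U)]; rfl
    nlinarith [norm_nonneg U]
  -- ‖R‖ = ‖T‖
  have hRT : ‖R‖ = ‖T‖ := by
    have h1 : ‖R‖ * ‖R‖ = ‖R * R‖ :=
      (CStarRing.norm_star_mul_self (x := R)).symm.trans (by rw [hRstar])
    have h2 : ‖adjoint T * T‖ = ‖T‖ * ‖T‖ := by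
      rw [← CStarRing.norm_star_mul_self (x := T)]; rfl
    rw [hRsq, h2] at h1
    nlinarith [norm_nonneg R, norm_nonneg T]
  -- pointwise norms: ‖T x‖ = ‖R x‖
  have hTRnorm : ∀ x : H, ‖T x‖ = ‖R x‖ := by
    intro x
    have h1 : (adjoint T) (T x) = R (R x) := by
      have := congrFun (congrArg DFunLike.coe hRsq) x
      simpa [ContinuousLinearMap.mul_def] using this.symm
    have h2 : (inner ℂ (T x) (T x) : ℂ) = inner ℂ (R x) (R x) := by
      have h2' := ContinuousLinearMap.adjoint_inner_left R x (R x)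
      rw [hRadj] at h2'
      rw [← ContinuousLinearMap.adjoint_inner_left T x (T x), h1, h2']
    rw [inner_self_eq_norm_sq_to_K (𝕜 := ℂ) (T x), inner_self_eq_norm_sq_to_K (𝕜 := ℂ) (R x)] at h2
    have h4 : ‖T x‖ ^ 2 = ‖R x‖ ^ 2 := by exact_mod_cast h2
    have h5 := congrArg Real.sqrt h4
    rwa [Real.sqrt_sq (norm_nonneg _), Real.sqrt_sq (norm_nonneg _)] at h5
  -- kernel inclusion: U x = 0 → R x = 0
  have hkerUR : ∀ x : H, U x = 0 → R x = 0 := by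
    intro x hx
    have hxT : T x = 0 := by
      have : x ∈ LinearMap.ker (T : H →ₗ[ℂ] H) := hker ▸ (LinearMap.mem_ker.mpr hx)
      exact LinearMap.mem_ker.mp this
    have := hTRnorm x
    rw [hxT, norm_zero] at this
    exact norm_eq_zero.mp this.symm
  -- R * (U†U) = R and (U†U) * R = R
  have hRP : R * (adjoint U * U) = R := by
    ext x
    have hU0 : U (x - (adjoint U * U) x) = 0 := by
      have := congrFun (congrArg DFunLike.coe hU3) x
      simp only [ContinuousLinearMap.mul_def, ContinuousLinearMap.coe_comp',
        Function.comp_apply] at this ⊢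
      rw [map_sub, this]
      simp [ContinuousLinearMap.mul_def]
    have hR0 := hkerUR _ hU0
    rw [map_sub] at hR0
    have : R ((adjoint U * U) x) = R x := by
      have := sub_eq_zero.mp hR0
      exact this.symm
    exact this
  have hPR : (adjoint U * U) * R = R := by
    have h := congrArg star hRP
    rwa [star_mul, hPstar, hRstar] at h
  -- the quadratic form bound
  have hform : ∀ z : H, l * ‖S z‖ ^ 2 + (1 - l) * ‖S (U z)‖ ^ 2 ≤ ‖M‖ * ‖z‖ ^ 2 := by
    intro z
    have e1 : (inner ℂ (T z) (U z) : ℂ) = (‖S z‖ : ℂ) ^ 2 := by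
      have hTz : T z = U (R z) := by
        rw [hTUR]; simp [ContinuousLinearMap.mul_apply]
      have a1 := ContinuousLinearMap.adjoint_inner_left U z (U (R z))
      have a2 : (adjoint U) (U (R z)) = R z := by
        have := congrFun (congrArg DFunLike.coe hPR) z
        simpa [ContinuousLinearMap.mul_apply] using this
      have a3 : R z = S (S z) := by
        rw [← hSsq]; simp [ContinuousLinearMap.mul_apply]
      have a4 := ContinuousLinearMap.adjoint_inner_left S z (S z)
      rw [hSadj] at a4
      rw [hTz, ← a1, a2, a3, a4, inner_self_eq_norm_sq_to_K]
      norm_cast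
    have e2 : (inner ℂ ((R * U) z) (U z) : ℂ) = (‖S (U z)‖ : ℂ) ^ 2 := by
      have a3 : (R * U) z = S (S (U z)) := by
        rw [← hSsq]; simp [ContinuousLinearMap.mul_apply]
      have a4 := ContinuousLinearMap.adjoint_inner_left S (U z) (S (U z))
      rw [hSadj] at a4
      rw [a3, a4, inner_self_eq_norm_sq_to_K]
      norm_cast
    have e3 : (inner ℂ (M z) (U z) : ℂ)
        = (l : ℂ) * (‖S z‖ : ℂ) ^ 2 + (1 - (l : ℂ)) * (‖S (U z)‖ : ℂ) ^ 2 := by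
      rw [hMdef]
      simp only [ContinuousLinearMap.add_apply, ContinuousLinearMap.coe_smul',
        Pi.smul_apply, inner_add_left, inner_smul_left, e1, e2, map_sub, map_one,
        Complex.conj_ofReal]
    have e4 : l * ‖S z‖ ^ 2 + (1 - l) * ‖S (U z)‖ ^ 2 = RCLike.re (inner ℂ (M z) (U z) : ℂ) := by
      rw [e3]
      have hcast : ((l : ℂ) * (‖S z‖ : ℂ) ^ 2 + (1 - (l : ℂ)) * (‖S (U z)‖ : ℂ) ^ 2)
          = (((l * ‖S z‖ ^ 2 + (1 - l) * ‖S (U z)‖ ^ 2 : ℝ)) : ℂ) := by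
        push_cast; ring
      rw [hcast]
      exact (RCLike.ofReal_re _).symm
    rw [e4]
    calc RCLike.re (inner ℂ (M z) (U z) : ℂ) ≤ ‖M z‖ * ‖U z‖ := re_inner_le_norm _ _
      _ ≤ (‖M‖ * ‖z‖) * (1 * ‖z‖) := by
          apply mul_le_mul (M.le_opNorm z) _ (norm_nonneg _)
            (mul_nonneg (norm_nonneg _) (norm_nonneg _))
          calc ‖U z‖ ≤ ‖U‖ * ‖z‖ := U.le_opNorm z
            _ ≤ 1 * ‖z‖ := mul_le_mul_of_nonneg_right hUnorm (norm_nonneg _)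
      _ = ‖M‖ * ‖z‖ ^ 2 := by ring
  -- AM-GM
  have hamgm : ∀ a b : ℝ, 2 * c * a * b ≤ l * a ^ 2 + (1 - l) * b ^ 2 := by
    intro a b
    have h1l : (0:ℝ) ≤ 1 - l := by linarith
    have hs : Real.sqrt l * Real.sqrt (1 - l) = c := by
      rw [hcdef, ← Real.sqrt_mul hl0]; ring_nf
    rw [← hs]
    nlinarith [sq_nonneg (Real.sqrt l * a - Real.sqrt (1 - l) * b), Real.sq_sqrt hl0,
      Real.sq_sqrt h1l, Real.sqrt_nonneg l, Real.sqrt_nonneg (1 - l)]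
  -- lower bound via Aluthge transform
  have hlowSUS : 2 * c * ‖S * U * S‖ ≤ ‖M‖ := by
    rcases eq_or_lt_of_le hc0 with h | h
    · rw [← h]; simpa using norm_nonneg M
    · have hSx2 : ∀ x : H, ‖S x‖ ^ 2 ≤ ‖S (S x)‖ * ‖x‖ := by
        intro x
        have a4 := ContinuousLinearMap.adjoint_inner_left S x (S x)
        rw [hSadj] at a4
        calc ‖S x‖ ^ 2 = RCLike.re (inner ℂ (S x) (S x) : ℂ) :=
              (inner_self_eq_norm_sq (𝕜 := ℂ) _).symm
          _ = RCLike.re (inner ℂ (S (S x)) x : ℂ) := by rw [a4]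
          _ ≤ ‖S (S x)‖ * ‖x‖ := re_inner_le_norm _ _
      have key : ∀ x : H, ‖(S * U * S) x‖ ≤ (‖M‖ / (2 * c)) * ‖x‖ := by
        intro x
        have happ : (S * U * S) x = S (U (S x)) := by
          simp [ContinuousLinearMap.mul_apply]
        by_cases h0 : S (S x) = 0
        · have hz0 : S x = 0 := by
            have := hSx2 x
            rw [h0, norm_zero, zero_mul] at this
            have : ‖S x‖ = 0 := by nlinarith [norm_nonneg (S x)]
            exact norm_eq_zero.mp this
          rw [happ, hz0, map_zero, map_zero, norm_zero]
          positivity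
        · have hSz : (0:ℝ) < ‖S (S x)‖ := norm_pos_iff.mpr h0
          have h1 := hform (S x)
          have h2 := hamgm ‖S (S x)‖ ‖S (U (S x))‖
          have h3 := hSx2 x
          have hMn : (0:ℝ) ≤ ‖M‖ := norm_nonneg M
          -- 2c ‖S(Sx)‖ ‖S(U(Sx))‖ ≤ ‖M‖ ‖Sx‖² ≤ ‖M‖ ‖S(Sx)‖ ‖x‖
          have h4 : 2 * c * ‖S (S x)‖ * ‖S (U (S x))‖ ≤ ‖M‖ * (‖S (S x)‖ * ‖x‖) := by
            nlinarith [norm_nonneg (S x)]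
          rw [happ]
          rw [div_mul_eq_mul_div, le_div_iff₀ (by positivity)]
          calc ‖S (U (S x))‖ * (2 * c) = (2 * c * ‖S (S x)‖ * ‖S (U (S x))‖) / ‖S (S x)‖ := by
                field_simp
            _ ≤ (‖M‖ * (‖S (S x)‖ * ‖x‖)) / ‖S (S x)‖ := by
                gcongr
            _ = ‖M‖ * ‖x‖ := by field_simp
      have hnorm := ContinuousLinearMap.opNorm_le_bound _
        (div_nonneg (norm_nonneg M) (by positivity)) key
      calc 2 * c * ‖S * U * S‖ ≤ 2 * c * (‖M‖ / (2 * c)) := by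
            exact mul_le_mul_of_nonneg_left hnorm (by positivity)
        _ = ‖M‖ := by field_simp
  -- upper bound
  have hupper : ‖M‖ ≤ l * ‖T‖ + (1 - l) * ‖R * U‖ := by
    calc ‖M‖ ≤ ‖(l : ℂ) • T‖ + ‖((1 : ℂ) - (l : ℂ)) • (R * U)‖ := norm_add_le _ _
      _ = l * ‖T‖ + (1 - l) * ‖R * U‖ := by
          rw [norm_smul, norm_smul]
          have c1 : ‖((l : ℝ) : ℂ)‖ = l := by
            rw [Complex.norm_real, Real.norm_eq_abs, abs_of_nonneg hl0]
          have c2 : ‖(1 : ℂ) - ((l : ℝ) : ℂ)‖ = 1 - l := by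
            have : (1 : ℂ) - ((l : ℝ) : ℂ) = (((1 - l : ℝ)) : ℂ) := by push_cast; ring
            rw [this, Complex.norm_real, Real.norm_eq_abs, abs_of_nonneg (by linarith)]
          rw [c1, c2]
  have hRU : ‖R * U‖ ≤ ‖T‖ := by
    calc ‖R * U‖ ≤ ‖R‖ * ‖U‖ := norm_mul_le R U
      _ ≤ ‖T‖ * 1 := by
          apply mul_le_mul (le_of_eq hRT) hUnorm (norm_nonneg _) (norm_nonneg _)
      _ = ‖T‖ := mul_one _
  have hTfin : ‖M‖ ≤ ‖T‖ := by
    have h1l : (0:ℝ) ≤ 1 - l := by linarith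
    calc ‖M‖ ≤ l * ‖T‖ + (1 - l) * ‖R * U‖ := hupper
      _ ≤ l * ‖T‖ + (1 - l) * ‖T‖ := by nlinarith
      _ = ‖T‖ := by ring
  -- spectral radius
  have hrT : (spectralRadius ℂ T).toReal ≤ ‖S * U * S‖ := by
    rcases subsingleton_or_nontrivial H with hH | hH
    · have : Subsingleton (H →L[ℂ] H) :=
        ⟨fun f g => ContinuousLinearMap.ext fun x => Subsingleton.elim _ _⟩
      rw [spectrum.SpectralRadius.of_subsingleton]
      simpa using norm_nonneg _
    · have h1 : T = (U * S) * S := by rw [hTUR, ← hSsq, mul_assoc]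
      have hspec : spectralRadius ℂ T = spectralRadius ℂ (S * U * S) := by
        rw [h1, specRad_mul_comm, ← mul_assoc]
      rw [hspec]
      have h2 := spectrum.spectralRadius_le_nnnorm (𝕜 := ℂ) (S * U * S)
      have h3 := ENNReal.toReal_mono ENNReal.coe_ne_top h2
      simpa using h3
  refine ⟨⟨hlowSUS, hupper⟩, ?_, hTfin⟩
  calc 2 * c * (spectralRadius ℂ T).toReal ≤ 2 * c * ‖S * U * S‖ :=
        mul_le_mul_of_nonneg_left hrT (by positivity)
    _ ≤ ‖M‖ := hlowSUS
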